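/- arXiv:1609.01386 — 2 statements merged into one kernel-verified Lean document; each statement's English description precedes it below -/
import Mathlib

section
/- For real numbers A ≠ 0, C > 0 and complex ν with Re(ν) > 1/2, the integral ∫_{-∞}^{∞} (A²x² + C)^{-ν} dx equals √π · (Γ(ν - 1/2)/Γ(ν)) · |A|^{-1} · C^{-ν + 1/2}. -/
open MeasureTheory Complex

open Set
lemma integrable_aux (ν : ℂ) (hν : 1 / 2 < ν.re) :
    Integrable (fun x : ℝ => ((1 + x ^ 2 : ℝ) : ℂ) ^ (-ν)) := by
  have hcont : Continuous (fun x : ℝ => ((1 + x ^ 2 : ℝ) : ℂ) ^ (-ν)) := by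
    apply Continuous.cpow
    · exact Complex.continuous_ofReal.comp (by continuity)
    · exact continuous_const
    · intro x
      left
      rw [Complex.ofReal_re]
      positivity
  have hnorm : ∀ x : ℝ, ‖((1 + x ^ 2 : ℝ) : ℂ) ^ (-ν)‖ = (1 + x ^ 2) ^ (-ν.re) := by
    intro x
    rw [Complex.norm_cpow_eq_rpow_re_of_pos (by positivity), neg_re]
  have hIoi : IntegrableOn (fun x : ℝ => ((1 + x ^ 2 : ℝ) : ℂ) ^ (-ν)) (Ioi 1) := by
    have hbig : IntegrableOn (fun x : ℝ => x ^ (-(2 * ν.re))) (Ioi 1) :=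
      integrableOn_Ioi_rpow_of_lt (by linarith) one_pos
    refine Integrable.mono hbig (hcont.aestronglyMeasurable.restrict) ?_
    filter_upwards [ae_restrict_mem measurableSet_Ioi] with x hx
    have hx1 : (1:ℝ) < x := hx
    rw [hnorm, Real.norm_of_nonneg (Real.rpow_nonneg (by nlinarith) _)]
    have heq : ((x:ℝ)^2) ^ (-ν.re) = x ^ (-(2 * ν.re)) := by
      rw [← Real.rpow_natCast x 2, ← Real.rpow_mul (by linarith)]
      ring_nf
    rw [← heq]
    exact Real.rpow_le_rpow_of_nonpos (by positivity) (by nlinarith) (by linarith)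
  have hIcc : IntegrableOn (fun x : ℝ => ((1 + x ^ 2 : ℝ) : ℂ) ^ (-ν)) (Ioc 0 1) :=
    (hcont.integrableOn_Icc (a := 0) (b := 1)).mono_set Ioc_subset_Icc_self
  have hIoi0 : IntegrableOn (fun x : ℝ => ((1 + x ^ 2 : ℝ) : ℂ) ^ (-ν)) (Ioi 0) := by
    have := hIcc.union hIoi
    rwa [Ioc_union_Ioi_eq_Ioi (by norm_num : (0:ℝ) ≤ 1)] at this
  have hIic0 : IntegrableOn (fun x : ℝ => ((1 + x ^ 2 : ℝ) : ℂ) ^ (-ν)) (Iic 0) := by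
    rw [← Measure.map_neg_eq_self (volume : Measure ℝ)]
    have m : MeasurableEmbedding fun x : ℝ => -x := (Homeomorph.neg ℝ).measurableEmbedding
    rw [m.integrableOn_map_iff]
    simp_rw [Function.comp_def, neg_sq, neg_preimage, neg_Iic, neg_zero]
    simpa using Iff.mpr integrableOn_Ici_iff_integrableOn_Ioi hIoi0
  have := hIic0.union hIoi0
  rwa [Iic_union_Ioi, integrableOn_univ] at this

lemma image_aux : (fun x : ℝ => x ^ 2 / (1 + x ^ 2)) '' (Ioi 0) = Ioo 0 1 := by
  ext u
  constructor
  · rintro ⟨x, hx, rfl⟩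
    have hx0 : (0:ℝ) < x := hx
    constructor
    · positivity
    · rw [div_lt_one (by positivity)]
      linarith
  · rintro ⟨hu0, hu1⟩
    refine ⟨Real.sqrt (u / (1 - u)), ?_, ?_⟩
    · have : (0:ℝ) < u / (1 - u) := by
        apply div_pos hu0; linarith
      exact Real.sqrt_pos.mpr this
    · have h1u : (0:ℝ) < 1 - u := by linarith
      have hsq : Real.sqrt (u / (1 - u)) ^ 2 = u / (1 - u) :=
        Real.sq_sqrt (le_of_lt (div_pos hu0 h1u))
      show Real.sqrt (u / (1 - u)) ^ 2 / (1 + Real.sqrt (u / (1 - u)) ^ 2) = u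
      rw [hsq]
      field_simp
      ring

lemma inj_aux : InjOn (fun x : ℝ => x ^ 2 / (1 + x ^ 2)) (Ioi 0) := by
  intro x hx y hy h
  simp only at h
  have hx0 : (0:ℝ) < x := hx
  have hy0 : (0:ℝ) < y := hy
  have h2 : x ^ 2 * (1 + y ^ 2) = y ^ 2 * (1 + x ^ 2) := by
    field_simp at h
    linarith [h]
  have : x ^ 2 = y ^ 2 := by nlinarith
  nlinarith [sq_nonneg (x - y), sq_nonneg (x + y)]

lemma deriv_aux (x : ℝ) (hx : x ∈ Ioi (0:ℝ)) :
    HasDerivWithinAt (fun x : ℝ => x ^ 2 / (1 + x ^ 2))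
      (2 * x / (1 + x ^ 2) ^ 2) (Ioi 0) x := by
  have h : HasDerivAt (fun x : ℝ => x ^ 2 / (1 + x ^ 2))
      (2 * x / (1 + x ^ 2) ^ 2) x := by
    have h1 : HasDerivAt (fun x : ℝ => x ^ 2) (2 * x) x := by
      simpa using hasDerivAt_pow 2 x
    have h2 : HasDerivAt (fun x : ℝ => 1 + x ^ 2) (2 * x) x := by
      simpa using h1.const_add 1
    have := h1.div h2 (by positivity)
    exact this.congr_deriv (by ring)
  exact h.hasDerivWithinAt

lemma pointwise_aux (ν : ℂ) (x : ℝ) (hx : 0 < x) :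
    |2 * x / (1 + x ^ 2) ^ 2| •
      ((((x ^ 2 / (1 + x ^ 2) : ℝ) : ℂ)) ^ ((1/2 : ℂ) - 1) *
        ((1 - ((x ^ 2 / (1 + x ^ 2) : ℝ) : ℂ)) ^ ((ν - 1/2) - 1)))
      = 2 * ((1 + x ^ 2 : ℝ) : ℂ) ^ (-ν) := by
  have hy : (0:ℝ) < 1 + x ^ 2 := by positivity
  set y : ℝ := 1 + x ^ 2 with hy_def
  have hY : ((y:ℝ):ℂ) ≠ 0 := by exact_mod_cast ne_of_gt hy
  have habs : |2 * x / y ^ 2| = 2 * x / y ^ 2 := abs_of_pos (by positivity)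
  -- first factor
  have hA : (((x ^ 2 / y : ℝ) : ℂ)) ^ ((1/2 : ℂ) - 1)
      = ((Real.sqrt y / x : ℝ) : ℂ) := by
    have he : ((1/2 : ℂ) - 1) = ((-(1/2) : ℝ) : ℂ) := by norm_num
    rw [he, ← Complex.ofReal_cpow (by positivity)]
    congr 1
    rw [Real.rpow_neg (by positivity), ← Real.sqrt_eq_rpow,
      Real.sqrt_div (sq_nonneg x), Real.sqrt_sq hx.le, inv_div]
  -- second factor
  have h1my : (1 : ℂ) - ((x ^ 2 / y : ℝ) : ℂ) = (((y:ℝ):ℂ))⁻¹ := by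
    rw [← Complex.ofReal_one, ← Complex.ofReal_sub, ← Complex.ofReal_inv]
    congr 1
    field_simp
    ring
  have hB : ((1 : ℂ) - ((x ^ 2 / y : ℝ) : ℂ)) ^ ((ν - 1/2) - 1)
      = (((y:ℝ):ℂ)) ^ (-((ν - 1/2) - 1)) := by
    rw [h1my, Complex.inv_cpow _ _ ?harg, ← Complex.cpow_neg]
    case harg =>
      rw [Complex.arg_ofReal_of_nonneg hy.le]
      exact Real.pi_ne_zero.symm
  rw [hA, hB, habs]
  -- now everything is powers of y
  have hsqrt : ((Real.sqrt y : ℝ) : ℂ) = ((y:ℝ):ℂ) ^ (1/2 : ℂ) := by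
    rw [Real.sqrt_eq_rpow, Complex.ofReal_cpow hy.le]
    norm_num
  have hx0 : ((x:ℝ):ℂ) ≠ 0 := by exact_mod_cast ne_of_gt hx
  push_cast
  rw [hsqrt]
  rw [show -((ν - 1/2) - 1) = (3/2 : ℂ) - ν by ring]
  have hy2 : ((y:ℝ):ℂ) ^ (2:ℕ) = ((y:ℝ):ℂ) ^ (2:ℂ) := by
    rw [← Complex.cpow_natCast]; norm_num
  field_simp
  rw [← Complex.cpow_add _ _ hY,
    show (1/2 : ℂ) + ((3:ℂ) - 2*ν)/2 = -ν + 2 by ring,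
    Complex.cpow_add _ _ hY, show ((2:ℂ)) = ((2:ℕ):ℂ) by norm_num, Complex.cpow_natCast]
  ring_nf
  rw [Complex.real_smul]
  push_cast
  field_simp

lemma integral_Ioi_aux (ν : ℂ) (hν : 1 / 2 < ν.re) :
    ∫ x in Ioi (0:ℝ), ((1 + x ^ 2 : ℝ) : ℂ) ^ (-ν)
      = Complex.betaIntegral (1/2) (ν - 1/2) / 2 := by
  have h := integral_image_eq_integral_abs_deriv_smul measurableSet_Ioi deriv_aux inj_aux
    (fun u : ℝ => ((u:ℂ)) ^ ((1/2:ℂ) - 1) * ((1 - (u:ℂ)) ^ ((ν - 1/2) - 1)))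
  rw [image_aux] at h
  have hrhs : ∫ x in Ioi (0:ℝ),
      |2 * x / (1 + x ^ 2) ^ 2| •
        ((((x ^ 2 / (1 + x ^ 2) : ℝ) : ℂ)) ^ ((1/2 : ℂ) - 1) *
          ((1 - ((x ^ 2 / (1 + x ^ 2) : ℝ) : ℂ)) ^ ((ν - 1/2) - 1)))
      = 2 * ∫ x in Ioi (0:ℝ), ((1 + x ^ 2 : ℝ) : ℂ) ^ (-ν) := by
    rw [← MeasureTheory.integral_const_mul]
    apply setIntegral_congr_fun measurableSet_Ioi
    intro x hx
    exact pointwise_aux ν x hx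
  have hlhs : Complex.betaIntegral (1/2) (ν - 1/2)
      = ∫ u in Ioo (0:ℝ) 1, ((u:ℂ)) ^ ((1/2:ℂ) - 1) * ((1 - (u:ℂ)) ^ ((ν - 1/2) - 1)) := by
    rw [Complex.betaIntegral, intervalIntegral.integral_of_le (by norm_num : (0:ℝ) ≤ 1),
      integral_Ioc_eq_integral_Ioo]
  have : Complex.betaIntegral (1/2) (ν - 1/2)
      = 2 * ∫ x in Ioi (0:ℝ), ((1 + x ^ 2 : ℝ) : ℂ) ^ (-ν) := by
    rw [hlhs]
    rw [← hrhs, ← h]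
  rw [this]
  ring

lemma integral_real_aux (ν : ℂ) (hν : 1 / 2 < ν.re) :
    ∫ x : ℝ, ((1 + x ^ 2 : ℝ) : ℂ) ^ (-ν)
      = (Real.sqrt Real.pi : ℂ) * (Complex.Gamma (ν - 1/2) / Complex.Gamma ν) := by
  have hint := integrable_aux ν hν
  have hsplit := intervalIntegral.integral_Iic_add_Ioi (b := (0:ℝ))
    hint.integrableOn hint.integrableOn
  have heven : ∫ x in Iic (0:ℝ), ((1 + x ^ 2 : ℝ) : ℂ) ^ (-ν)
      = ∫ x in Ioi (0:ℝ), ((1 + x ^ 2 : ℝ) : ℂ) ^ (-ν) := by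
    rw [show Iic (0:ℝ) = Iic (-0) by norm_num,
      ← integral_comp_neg_Ioi 0 (fun x => ((1 + x ^ 2 : ℝ) : ℂ) ^ (-ν))]
    simp [neg_sq]
  have h2 : ∫ x : ℝ, ((1 + x ^ 2 : ℝ) : ℂ) ^ (-ν)
      = Complex.betaIntegral (1/2) (ν - 1/2) := by
    rw [← hsplit, heven, integral_Ioi_aux ν hν]
    ring
  have hs : 0 < ((1:ℂ)/2).re := by norm_num
  have ht : 0 < (ν - 1/2).re := by
    simp only [sub_re, one_div, inv_re]
    simp [Complex.normSq]
    linarith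
  have hbeta := Complex.Gamma_mul_Gamma_eq_betaIntegral hs ht
  have hsum : (1:ℂ)/2 + (ν - 1/2) = ν := by ring
  rw [hsum] at hbeta
  have hΓν : Complex.Gamma ν ≠ 0 := Complex.Gamma_ne_zero_of_re_pos (by linarith)
  have hhalf : Complex.Gamma (1/2) = (Real.sqrt Real.pi : ℂ) := by
    rw [Complex.Gamma_one_half_eq, Real.sqrt_eq_rpow, Complex.ofReal_cpow Real.pi_pos.le]
    norm_num
  rw [hhalf] at hbeta
  rw [h2, ← mul_div_assoc, hbeta, mul_comm, mul_div_assoc, div_self hΓν, mul_one]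

/-- Gradshteyn–Ryzhik type integral: ∫_{-∞}^{∞} (A²x² + C)^{-ν} dx
    = √π · Γ(ν - 1/2)/Γ(ν) · |A|⁻¹ · C^{-ν+1/2}. -/
theorem stmt0 (A C : ℝ) (hA : A ≠ 0) (hC : 0 < C) (ν : ℂ) (hν : 1 / 2 < ν.re) :
    (∫ x : ℝ, ((A ^ 2 * x ^ 2 + C : ℝ) : ℂ) ^ (-ν))
      = (Real.sqrt Real.pi : ℂ) * (Complex.Gamma (ν - 1 / 2) / Complex.Gamma ν) *
        ((|A| : ℝ) : ℂ)⁻¹ * ((C : ℝ) : ℂ) ^ (-ν + 1 / 2) := by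
  have hAabs : (0:ℝ) < |A| := abs_pos.mpr hA
  have hsC : (0:ℝ) < Real.sqrt C := Real.sqrt_pos.mpr hC
  set a : ℝ := |A| / Real.sqrt C with ha_def
  have ha : 0 < a := div_pos hAabs hsC
  have hpoint : ∀ x : ℝ, ((A ^ 2 * x ^ 2 + C : ℝ) : ℂ) ^ (-ν)
      = ((C:ℝ):ℂ) ^ (-ν) * ((1 + (a * x) ^ 2 : ℝ) : ℂ) ^ (-ν) := by
    intro x
    have h1 : Real.sqrt C ^ 2 = C := Real.sq_sqrt hC.le
    have h2 : |A| ^ 2 = A ^ 2 := sq_abs A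
    have hax : (a * x) ^ 2 = A ^ 2 * x ^ 2 / C := by
      rw [ha_def, mul_pow, div_pow, h1, h2]
      ring
    have key : A ^ 2 * x ^ 2 + C = C * (1 + (a * x) ^ 2) := by
      rw [hax]
      field_simp
      ring
    rw [key, Complex.ofReal_mul, Complex.mul_cpow_ofReal_nonneg hC.le (by positivity)]
  simp_rw [hpoint]
  rw [MeasureTheory.integral_const_mul]
  have hcomp : (∫ x : ℝ, ((1 + (a * x) ^ 2 : ℝ) : ℂ) ^ (-ν))
      = |a⁻¹| • ∫ y : ℝ, ((1 + y ^ 2 : ℝ) : ℂ) ^ (-ν) :=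
    MeasureTheory.Measure.integral_comp_mul_left
      (fun y : ℝ => ((1 + y ^ 2 : ℝ) : ℂ) ^ (-ν)) a
  rw [hcomp, integral_real_aux ν hν]
  have habs : |a⁻¹| = Real.sqrt C / |A| := by
    rw [abs_of_pos (inv_pos.mpr ha), ha_def, inv_div]
  rw [habs]
  rw [Complex.real_smul]
  push_cast
  have hsqrtC : ((Real.sqrt C : ℝ) : ℂ) = ((C:ℝ):ℂ) ^ (1/2 : ℂ) := by
    rw [Real.sqrt_eq_rpow, Complex.ofReal_cpow hC.le]
    norm_num
  have hCne : ((C:ℝ):ℂ) ≠ 0 := by exact_mod_cast ne_of_gt hC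
  rw [hsqrtC]
  rw [show (-ν + 1/2 : ℂ) = -ν + 1/2 from rfl, Complex.cpow_add _ _ hCne]
  ring
end

section
/- Let n ≥ 2, γ ∈ SL_k(ℤ) with bottom row (γ_{k,1},...,γ_{k,k}), and z ∈ X_n in Iwasawa form. Then the (k, k+1)-entry of the unipotent part of the Iwasawa form of diag(γ, I_{n−k})·z equals ∑_{i=1}^k γ_{k,i} x_{i,k+1}, where x_{i,k+1} are the corresponding entries of the unipotent part of z. -/
open Matrix

/-- Effect of the embedded SL_k(ℤ)-action on the superdiagonal entry x_{k,k+1}: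
    the (k,k+1)-entry of the unipotent part of the Iwasawa form of
    diag(γ, I_{n−k})·z equals ∑_{i=1}^k γ_{k,i} x_{i,k+1}. -/
theorem stmt11 (n k : ℕ) (hn : 2 ≤ n) (hk : 2 ≤ k) (hkn : k + 1 ≤ n)
    (γ : Matrix (Fin k) (Fin k) ℤ) (hγ : γ.det = 1)
    (x x' : Matrix (Fin n) (Fin n) ℝ)
    (hxd : ∀ i, x i i = 1) (hxl : ∀ i j : Fin n, j < i → x i j = 0)
    (hxd' : ∀ i, x' i i = 1) (hxl' : ∀ i j : Fin n, j < i → x' i j = 0)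
    (y y' : ℕ → ℝ)
    (hy : ∀ j, 1 ≤ j → j ≤ n - 1 → 0 < y j) (hy' : ∀ j, 1 ≤ j → j ≤ n - 1 → 0 < y' j)
    (κ : Matrix (Fin n) (Fin n) ℝ) (hκ : κ * κ.transpose = 1) (c : ℝ) (hc : 0 < c)
    -- diag(γ, I_{n−k}) · (x·Y) = c • (x'·Y'·κ) : equality in X_n
    (hIwa :
      (Matrix.of fun i j : Fin n =>
          if h : (i : ℕ) < k ∧ (j : ℕ) < k then ((γ ⟨i, h.1⟩ ⟨j, h.2⟩ : ℤ) : ℝ)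
          else if i = j then 1 else 0) *
        (x * Matrix.diagonal fun i : Fin n => ∏ j ∈ Finset.Icc 1 (n - 1 - (i : ℕ)), y j)
      = c • (x' *
          (Matrix.diagonal fun i : Fin n => ∏ j ∈ Finset.Icc 1 (n - 1 - (i : ℕ)), y' j) *
          κ)) :
    let γf : ℕ → ℕ → ℝ := fun i j =>
      if h : i < k ∧ j < k then ((γ ⟨i, h.1⟩ ⟨j, h.2⟩ : ℤ) : ℝ) else 0
    let xf : ℕ → ℕ → ℝ := fun i j =>
      if h : i < n ∧ j < n then x ⟨i, h.1⟩ ⟨j, h.2⟩ else 0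
    x' ⟨k - 1, by omega⟩ ⟨k, by omega⟩ = ∑ i ∈ Finset.range k, γf (k - 1) i * xf i k := by
  intro γf xf
  have hkn' : k < n := by omega
  have hk1 : k - 1 < n := by omega
  set g : Matrix (Fin n) (Fin n) ℝ := Matrix.of fun i j : Fin n =>
      if h : (i : ℕ) < k ∧ (j : ℕ) < k then ((γ ⟨i, h.1⟩ ⟨j, h.2⟩ : ℤ) : ℝ)
      else if i = j then 1 else 0 with hg
  set Y : Fin n → ℝ := fun i : Fin n => ∏ j ∈ Finset.Icc 1 (n - 1 - (i : ℕ)), y j with hYdef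
  set Y' : Fin n → ℝ := fun i : Fin n => ∏ j ∈ Finset.Icc 1 (n - 1 - (i : ℕ)), y' j with hY'def
  have hYpos : ∀ i : Fin n, 0 < Y i := by
    intro i
    apply Finset.prod_pos
    intro j hj
    rw [Finset.mem_Icc] at hj
    exact hy j hj.1 (by omega)
  have hY'pos : ∀ i : Fin n, 0 < Y' i := by
    intro i
    apply Finset.prod_pos
    intro j hj
    rw [Finset.mem_Icc] at hj
    exact hy' j hj.1 (by omega)
  -- rewrite the products with diagonal matrices
  have hxD : x * Matrix.diagonal Y = Matrix.of (fun l j : Fin n => x l j * Y j) := by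
    ext l j
    simp [Matrix.mul_diagonal]
  have hx'D : x' * Matrix.diagonal Y' = Matrix.of (fun l j : Fin n => x' l j * Y' j) := by
    ext l j
    simp [Matrix.mul_diagonal]
  rw [hxD, hx'D] at hIwa
  have hent : ∀ i j : Fin n,
      ∑ l, g i l * (x l j * Y j) = c * ∑ m, (x' i m * Y' m) * κ m j := by
    intro i j
    have h := congrFun (congrFun hIwa i) j
    simpa only [Matrix.mul_apply, Matrix.smul_apply, Matrix.of_apply, smul_eq_mul] using h
  -- orthogonality relations
  have hor : ∀ i j : Fin n, ∑ m, κ i m * κ j m = if i = j then 1 else 0 := by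
    intro i j
    have h := congrFun (congrFun hκ i) j
    simpa only [Matrix.mul_apply, Matrix.transpose_apply, Matrix.one_apply] using h
  have hκ' : κ.transpose * κ = 1 := mul_eq_one_comm.mp hκ
  have hor' : ∀ i j : Fin n, ∑ m, κ m i * κ m j = if i = j then 1 else 0 := by
    intro i j
    have h := congrFun (congrFun hκ' i) j
    simpa only [Matrix.mul_apply, Matrix.transpose_apply, Matrix.one_apply] using h
  -- rows of g below the γ-block are standard basis vectors
  have hgrow : ∀ i l : Fin n, k ≤ (i : ℕ) → g i l = if i = l then 1 else 0 := by
    intro i l hi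
    simp only [hg, Matrix.of_apply]
    rw [dif_neg (by omega)]
  -- the main induction: for rows i ≥ k, κ i is supported at i
  have main : ∀ d : ℕ, ∀ i : Fin n, n - (i : ℕ) ≤ d → k ≤ (i : ℕ) →
      ∀ j : Fin n, j ≠ i → κ i j = 0 := by
    intro d
    induction d with
    | zero =>
      intro i hd
      exact absurd hd (by have := i.isLt; omega)
    | succ d ih =>
      intro i hd hki j hj
      have hji : (j : ℕ) ≠ (i : ℕ) := fun h => hj (Fin.ext h)
      rcases Nat.lt_or_ge (j : ℕ) (i : ℕ) with hlt | hge
      · -- j < i : use triangularity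
        have hLzero : ∑ l, g i l * (x l j * Y j) = 0 := by
          apply Finset.sum_eq_zero
          intro l _
          rcases eq_or_ne i l with rfl | hne
          · rw [hxl i j (Fin.lt_def.mpr hlt), zero_mul, mul_zero]
          · rw [hgrow i l hki, if_neg hne, zero_mul]
        have hsum0 : ∑ m, (x' i m * Y' m) * κ m j = 0 := by
          have h := hent i j
          rw [hLzero] at h
          exact (mul_eq_zero.mp h.symm).resolve_left (ne_of_gt hc)
        rw [Finset.sum_eq_single i] at hsum0
        · rw [hxd' i, one_mul] at hsum0
          rcases mul_eq_zero.mp hsum0 with h | h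
          · exact absurd h (ne_of_gt (hY'pos i))
          · exact h
        · intro b _ hb
          rcases Nat.lt_or_ge (b : ℕ) (i : ℕ) with hbi | hbi
          · rw [hxl' i b (Fin.lt_def.mpr hbi), zero_mul, zero_mul]
          · have hbi' : (i : ℕ) < (b : ℕ) :=
              lt_of_le_of_ne hbi (fun h => hb (Fin.ext h.symm))
            rw [ih b (by have := b.isLt; omega) (by omega) j
              (fun h => absurd (congrArg Fin.val h) (by omega)), mul_zero]
        · intro h; exact absurd (Finset.mem_univ i) h
      · -- i < j : use orthogonality with row j
        have hgt : (i : ℕ) < (j : ℕ) := lt_of_le_of_ne hge (Ne.symm hji)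
        have hjrow : ∀ m : Fin n, m ≠ j → κ j m = 0 := by
          intro m hm
          exact ih j (by have := j.isLt; omega) (by omega) m hm
        have hjj : κ j j * κ j j = 1 := by
          have h := hor j j
          rw [if_pos rfl, Finset.sum_eq_single j] at h
          · exact h
          · intro b _ hb; rw [hjrow b hb, mul_zero]
          · intro h; exact absurd (Finset.mem_univ j) h
        have h2 := hor i j
        rw [if_neg (Ne.symm hj), Finset.sum_eq_single j] at h2
        · rcases mul_eq_zero.mp h2 with h | h
          · exact h
          · exact absurd h (by intro h0; rw [h0, mul_zero] at hjj; exact zero_ne_one hjj)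
        · intro b _ hb; rw [hjrow b hb, mul_zero]
        · intro h; exact absurd (Finset.mem_univ j) h
  -- row k of κ is supported at k
  have hkrow : ∀ j : Fin n, j ≠ ⟨k, hkn'⟩ → κ ⟨k, hkn'⟩ j = 0 :=
    fun j hj => main n ⟨k, hkn'⟩ (by omega) (le_refl k) j hj
  have hKK : κ ⟨k, hkn'⟩ ⟨k, hkn'⟩ * κ ⟨k, hkn'⟩ ⟨k, hkn'⟩ = 1 := by
    have h := hor ⟨k, hkn'⟩ ⟨k, hkn'⟩
    rw [if_pos rfl, Finset.sum_eq_single (⟨k, hkn'⟩ : Fin n)] at h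
    · exact h
    · intro b _ hb; rw [hkrow b hb, mul_zero]
    · intro h; exact absurd (Finset.mem_univ _) h
  -- column k of κ is supported at k
  have hcol : ∀ m : Fin n, m ≠ ⟨k, hkn'⟩ → κ m ⟨k, hkn'⟩ = 0 := by
    have h := hor' ⟨k, hkn'⟩ ⟨k, hkn'⟩
    rw [if_pos rfl] at h
    have hsplit := Finset.sum_erase_add Finset.univ
      (fun m => κ m ⟨k, hkn'⟩ * κ m ⟨k, hkn'⟩) (Finset.mem_univ (⟨k, hkn'⟩ : Fin n))
    rw [h, hKK] at hsplit
    have hz : ∑ m ∈ Finset.univ.erase (⟨k, hkn'⟩ : Fin n),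
        κ m ⟨k, hkn'⟩ * κ m ⟨k, hkn'⟩ = 0 := by linarith
    intro m hm
    have := (Finset.sum_eq_zero_iff_of_nonneg (fun b _ => mul_self_nonneg _)).mp hz m
      (Finset.mem_erase.mpr ⟨hm, Finset.mem_univ m⟩)
    exact mul_self_eq_zero.mp this
  -- entry (k,k) of the Iwasawa equation
  have hEkk : Y ⟨k, hkn'⟩ = c * (Y' ⟨k, hkn'⟩ * κ ⟨k, hkn'⟩ ⟨k, hkn'⟩) := by
    have h := hent ⟨k, hkn'⟩ ⟨k, hkn'⟩
    have hL : ∑ l, g ⟨k, hkn'⟩ l * (x l ⟨k, hkn'⟩ * Y ⟨k, hkn'⟩) = Y ⟨k, hkn'⟩ := by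
      rw [Finset.sum_eq_single (⟨k, hkn'⟩ : Fin n)]
      · rw [hgrow _ _ (le_refl k), if_pos rfl, hxd, one_mul, one_mul]
      · intro b _ hb
        rw [hgrow _ _ (le_refl k), if_neg (fun hh => hb hh.symm), zero_mul]
      · intro h; exact absurd (Finset.mem_univ _) h
    have hR : ∑ m, (x' ⟨k, hkn'⟩ m * Y' m) * κ m ⟨k, hkn'⟩
        = Y' ⟨k, hkn'⟩ * κ ⟨k, hkn'⟩ ⟨k, hkn'⟩ := by
      rw [Finset.sum_eq_single (⟨k, hkn'⟩ : Fin n)]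
      · rw [hxd', one_mul]
      · intro b _ hb; rw [hcol b hb, mul_zero]
      · intro h; exact absurd (Finset.mem_univ _) h
    rw [hL, hR] at h
    exact h
  -- entry (k-1,k) of the Iwasawa equation
  have hEk1 : (∑ l, g ⟨k - 1, hk1⟩ l * x l ⟨k, hkn'⟩) * Y ⟨k, hkn'⟩
      = x' ⟨k - 1, hk1⟩ ⟨k, hkn'⟩ * Y ⟨k, hkn'⟩ := by
    have h := hent ⟨k - 1, hk1⟩ ⟨k, hkn'⟩
    have hR : ∑ m, (x' ⟨k - 1, hk1⟩ m * Y' m) * κ m ⟨k, hkn'⟩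
        = x' ⟨k - 1, hk1⟩ ⟨k, hkn'⟩ * (Y' ⟨k, hkn'⟩ * κ ⟨k, hkn'⟩ ⟨k, hkn'⟩) := by
      rw [Finset.sum_eq_single (⟨k, hkn'⟩ : Fin n)]
      · ring
      · intro b _ hb; rw [hcol b hb, mul_zero]
      · intro h; exact absurd (Finset.mem_univ _) h
    rw [hR] at h
    calc (∑ l, g ⟨k - 1, hk1⟩ l * x l ⟨k, hkn'⟩) * Y ⟨k, hkn'⟩
        = ∑ l, g ⟨k - 1, hk1⟩ l * (x l ⟨k, hkn'⟩ * Y ⟨k, hkn'⟩) := by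
          rw [Finset.sum_mul]; exact Finset.sum_congr rfl (fun l _ => by ring)
      _ = c * (x' ⟨k - 1, hk1⟩ ⟨k, hkn'⟩ * (Y' ⟨k, hkn'⟩ * κ ⟨k, hkn'⟩ ⟨k, hkn'⟩)) := h
      _ = x' ⟨k - 1, hk1⟩ ⟨k, hkn'⟩ * (c * (Y' ⟨k, hkn'⟩ * κ ⟨k, hkn'⟩ ⟨k, hkn'⟩)) := by ring
      _ = x' ⟨k - 1, hk1⟩ ⟨k, hkn'⟩ * Y ⟨k, hkn'⟩ := by rw [← hEkk]
  have hx'val : x' ⟨k - 1, hk1⟩ ⟨k, hkn'⟩ = ∑ l, g ⟨k - 1, hk1⟩ l * x l ⟨k, hkn'⟩ :=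
    (mul_right_cancel₀ (ne_of_gt (hYpos _)) hEk1).symm
  -- convert the Fin-indexed sum to the range sum in the statement
  have hsum : ∑ l, g ⟨k - 1, hk1⟩ l * x l ⟨k, hkn'⟩
      = ∑ i ∈ Finset.range k, γf (k - 1) i * xf i k := by
    have h1 : ∑ i ∈ Finset.range k, γf (k - 1) i * xf i k
        = ∑ i ∈ Finset.range n, γf (k - 1) i * xf i k := by
      apply Finset.sum_subset (Finset.range_subset_range.mpr (by omega))
      intro i hi hni
      rw [Finset.mem_range] at hi hni
      show (if h : k - 1 < k ∧ i < k then ((γ ⟨k - 1, h.1⟩ ⟨i, h.2⟩ : ℤ) : ℝ) else 0) *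
        xf i k = 0
      rw [dif_neg (by omega), zero_mul]
    rw [h1, ← Fin.sum_univ_eq_sum_range (fun i => γf (k - 1) i * xf i k) n]
    apply Finset.sum_congr rfl
    intro l _
    show g ⟨k - 1, hk1⟩ l * x l ⟨k, hkn'⟩
        = (if h : k - 1 < k ∧ (l : ℕ) < k then ((γ ⟨k - 1, h.1⟩ ⟨(l : ℕ), h.2⟩ : ℤ) : ℝ) else 0) *
          (if h : (l : ℕ) < n ∧ k < n then x ⟨(l : ℕ), h.1⟩ ⟨k, h.2⟩ else 0)
    simp only [hg, Matrix.of_apply]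
    rcases Nat.lt_or_ge (l : ℕ) k with hl | hl
    · rw [dif_pos (⟨show k - 1 < k by omega, hl⟩ :
          ((⟨k - 1, hk1⟩ : Fin n) : ℕ) < k ∧ (l : ℕ) < k),
        dif_pos (⟨show k - 1 < k by omega, hl⟩ : k - 1 < k ∧ (l : ℕ) < k),
        dif_pos (⟨l.isLt, hkn'⟩ : (l : ℕ) < n ∧ k < n)]
    · have hc1 : ¬(((⟨k - 1, hk1⟩ : Fin n) : ℕ) < k ∧ (l : ℕ) < k) :=
        fun h => absurd h.2 (by omega)
      have hc2 : (⟨k - 1, hk1⟩ : Fin n) ≠ l :=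
        Fin.ne_of_val_ne (show k - 1 ≠ (l : ℕ) by omega)
      have hc3 : ¬(k - 1 < k ∧ (l : ℕ) < k) := fun h => absurd h.2 (by omega)
      rw [dif_neg hc1, if_neg hc2, zero_mul, dif_neg hc3, zero_mul]
  exact hx'val.trans hsum
end
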